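/- If G is a Roman graph of order n and H is any graph, then γ_R(G □ H) ≤ 2n·(γ_R(H) − γ(H)) + 2γ(G)·(2γ(H) − γ_R(H)). -/

import Mathlib

open Finset

/-- A set `S` is a dominating set of `G` if every vertex outside `S` has a neighbor in `S`. -/
def IsDominatingSet {V : Type*} (G : SimpleGraph V) (S : Set V) : Prop :=
  ∀ v, v ∉ S → ∃ u ∈ S, G.Adj u v

/-- The domination number `γ(G)`. -/
noncomputable def domNum {V : Type*} [Fintype V] (G : SimpleGraph V) : ℕ :=
  sInf {n | ∃ S : Finset V, IsDominatingSet G ↑S ∧ S.card = n}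

/-- A Roman dominating function: values in {0,1,2}, every vertex of value 0 has a
neighbor of value 2. -/
def IsRDF {V : Type*} (G : SimpleGraph V) (f : V → ℕ) : Prop :=
  (∀ v, f v ≤ 2) ∧ ∀ v, f v = 0 → ∃ u, G.Adj u v ∧ f u = 2

/-- The Roman domination number `γ_R(G)`. -/
noncomputable def romanDomNum {V : Type*} [Fintype V] (G : SimpleGraph V) : ℕ :=
  sInf {n | ∃ f : V → ℕ, IsRDF G f ∧ ∑ v, f v = n}

/-- The strong product of graphs. -/
def strongProd {V W : Type*} (G : SimpleGraph V) (H : SimpleGraph W) :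
    SimpleGraph (V × W) where
  Adj x y := x ≠ y ∧ (x.1 = y.1 ∨ G.Adj x.1 y.1) ∧ (x.2 = y.2 ∨ H.Adj x.2 y.2)
  symm := ⟨fun x y => by
    rintro ⟨h, h1, h2⟩
    refine ⟨h.symm, ?_, ?_⟩
    · cases h1 with
      | inl h => exact Or.inl h.symm
      | inr h => exact Or.inr h.symm
    · cases h2 with
      | inl h => exact Or.inl h.symm
      | inr h => exact Or.inr h.symm⟩
  loopless := ⟨fun x => by simp⟩

/-- `G` has an efficient dominating set: a dominating set whose elements have
pairwise disjoint closed neighborhoods. -/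
def HasEfficientDomSet {V : Type*} (G : SimpleGraph V) : Prop :=
  ∃ S : Finset V, IsDominatingSet G ↑S ∧
    ∀ u ∈ S, ∀ v ∈ S, u ≠ v →
      Disjoint (insert u (G.neighborSet u)) (insert v (G.neighborSet v))

lemma romanDomNum_mem {V : Type*} [Fintype V] (G : SimpleGraph V) :
    ∃ f : V → ℕ, IsRDF G f ∧ ∑ v, f v = romanDomNum G := by
  have hne : {n | ∃ f : V → ℕ, IsRDF G f ∧ ∑ v, f v = n}.Nonempty := by
    refine ⟨Fintype.card V, fun _ => 1, ⟨fun v => one_le_two, fun v h => absurd h one_ne_zero⟩, ?_⟩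
    simp
  exact Nat.sInf_mem hne

lemma domNum_mem {V : Type*} [Fintype V] (G : SimpleGraph V) :
    ∃ S : Finset V, IsDominatingSet G ↑S ∧ S.card = domNum G := by
  have hne : {n | ∃ S : Finset V, IsDominatingSet G ↑S ∧ S.card = n}.Nonempty := by
    refine ⟨(univ : Finset V).card, univ, fun v hv => absurd (by simp) hv, rfl⟩
  exact Nat.sInf_mem hne

lemma romanDomNum_le_card {V : Type*} [Fintype V] (G : SimpleGraph V) :
    romanDomNum G ≤ Fintype.card V :=
  Nat.sInf_le ⟨fun _ => 1, ⟨fun v => one_le_two, fun v h => absurd h one_ne_zero⟩, by simp⟩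

lemma domNum_le {V : Type*} [Fintype V] (G : SimpleGraph V) (S : Finset V)
    (hS : IsDominatingSet G ↑S) : domNum G ≤ S.card :=
  Nat.sInf_le ⟨S, hS, rfl⟩

theorem stmt14 {V W : Type*} [Fintype V] [Fintype W]
    (G : SimpleGraph V) (H : SimpleGraph W)
    (hRoman : romanDomNum G = 2 * domNum G) :
    (romanDomNum (G.boxProd H) : ℤ) ≤
      2 * Fintype.card V * ((romanDomNum H : ℤ) - domNum H) +
        2 * domNum G * (2 * (domNum H : ℤ) - romanDomNum H) := by
  classical
  obtain ⟨f, ⟨hf2, hf0⟩, hfsum⟩ := romanDomNum_mem H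
  obtain ⟨D, hD, hDcard⟩ := domNum_mem G
  set A : Finset W := univ.filter (fun w => f w = 1) with hA
  set B : Finset W := univ.filter (fun w => f w = 2) with hB
  -- γ_R(H) = |A| + 2|B|
  have hRsum : romanDomNum H = A.card + 2 * B.card := by
    rw [← hfsum]
    have key : ∀ w, f w = (if f w = 1 then 1 else 0) + (if f w = 2 then 2 else 0) := by
      intro w
      have := hf2 w
      interval_cases h : f w <;> simp
    rw [Finset.sum_congr rfl (fun w _ => key w), Finset.sum_add_distrib]
    congr 1
    · rw [← Finset.sum_filter, ← hA, Finset.sum_const, smul_eq_mul, mul_one]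
    · rw [← Finset.sum_filter, ← hB, Finset.sum_const, smul_eq_mul, mul_comm]
  -- γ(H) ≤ |A| + |B|
  have hDH : domNum H ≤ A.card + B.card := by
    have hdom : IsDominatingSet H ↑(A ∪ B) := by
      intro w hw
      have hw0 : f w = 0 := by
        simp only [coe_union, Set.mem_union, mem_coe, hA, hB, mem_filter, mem_univ,
          true_and] at hw
        push_neg at hw
        have := hf2 w
        omega
      obtain ⟨u, hu, hu2⟩ := hf0 w hw0
      exact ⟨u, by simp [hA, hB, hu2], hu⟩
    calc domNum H ≤ (A ∪ B).card := domNum_le H _ hdom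
      _ ≤ A.card + B.card := card_union_le A B
  -- 2γ(G) ≤ n
  have h2g : 2 * domNum G ≤ Fintype.card V := by
    rw [← hRoman]; exact romanDomNum_le_card G
  -- The RDF on the box product
  set g : V × W → ℕ := fun p =>
    (if f p.2 = 2 then 2 else 0) + (if f p.2 = 1 ∧ p.1 ∈ D then 2 else 0) with hg
  have hgRDF : IsRDF (G.boxProd H) g := by
    constructor
    · rintro ⟨u, w⟩
      by_cases h1 : f w = 2
      · have h2 : ¬(f w = 1 ∧ u ∈ D) := fun h => by omega
        simp [hg, h1, h2]
      · by_cases h2 : f w = 1 ∧ u ∈ D <;> simp [hg, h1, h2]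
    · rintro ⟨u, w⟩ hgw
      simp only [hg] at hgw
      have hnot2 : f w ≠ 2 := by intro h; simp [h] at hgw
      by_cases h1 : f w = 1
      · have huD : u ∉ D := by intro h; simp [h1, h] at hgw
        obtain ⟨u', hu'D, hu'adj⟩ := hD u huD
        have hu'D' : u' ∈ D := hu'D
        refine ⟨(u', w), Or.inl ⟨hu'adj, rfl⟩, ?_⟩
        simp [hg, h1, hu'D', hnot2]
      · have hw0 : f w = 0 := by have := hf2 w; omega
        obtain ⟨w', hw'adj, hw'2⟩ := hf0 w hw0
        refine ⟨(u, w'), Or.inr ⟨hw'adj, rfl⟩, by simp [hg, hw'2]⟩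
  -- its weight
  have hgsum : ∑ p : V × W, g p = 2 * Fintype.card V * B.card + 2 * domNum G * A.card := by
    rw [Fintype.sum_prod_type]
    have inner : ∀ u : V, ∑ w, g (u, w) =
        2 * B.card + (if u ∈ D then 2 * A.card else 0) := by
      intro u
      simp only [hg, Finset.sum_add_distrib]
      congr 1
      · rw [← Finset.sum_filter, ← hB, Finset.sum_const, smul_eq_mul, mul_comm]
      · by_cases hu : u ∈ D
        · simp only [hu, and_true, if_pos]
          rw [← Finset.sum_filter, ← hA, Finset.sum_const, smul_eq_mul, mul_comm]
        · simp [hu]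
    rw [Finset.sum_congr rfl (fun u _ => inner u), Finset.sum_add_distrib]
    congr 1
    · rw [Finset.sum_const, Finset.card_univ, smul_eq_mul]; ring
    · rw [Finset.sum_ite_mem, Finset.univ_inter, Finset.sum_const, smul_eq_mul, hDcard]
      ring
  have hle : romanDomNum (G.boxProd H) ≤
      2 * Fintype.card V * B.card + 2 * domNum G * A.card := by
    rw [← hgsum]
    exact Nat.sInf_le ⟨g, hgRDF, rfl⟩
  -- arithmetic
  have hleZ : (romanDomNum (G.boxProd H) : ℤ) ≤
      2 * Fintype.card V * B.card + 2 * domNum G * A.card := by exact_mod_cast hle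
  have hRZ : (romanDomNum H : ℤ) = A.card + 2 * B.card := by exact_mod_cast hRsum
  have hDHZ : (domNum H : ℤ) ≤ A.card + B.card := by exact_mod_cast hDH
  have h2gZ : 2 * (domNum G : ℤ) ≤ Fintype.card V := by exact_mod_cast h2g
  nlinarith [mul_nonneg (by linarith : (0:ℤ) ≤ Fintype.card V - 2 * domNum G)
    (by linarith : (0:ℤ) ≤ (A.card : ℤ) + B.card - domNum H)]
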